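/- Let κ be an uncountable cardinal with a cofinal Kurepa family K in [κ]^ω, and well-order K by ≺. For A ∈ K set Y_A = A^ω \ ⋃{B^ω : B ≺ A} as subspaces of the product space κ^ω (κ discrete). Then each nonempty Y_A is a Polish space (second countable and G_δ in κ^ω), and the nonempty Y_A's partition κ^ω into exactly |K| Polish subspaces. Consequently par(κ^ω) ≤ cf[κ]^ω. -/

import Mathlib

open Cardinal Set

section Aux

/-- A countable intersection of open sets in a Polish space is Polish. -/
lemma gdelta_polish {X : Type*} [TopologicalSpace X] [PolishSpace X]
    (U : ℕ → Set X) (hU : ∀ n, IsOpen (U n)) : PolishSpace ↥(⋂ n, U n) := by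
  haveI : ∀ n, PolishSpace (U n) := fun n => (hU n).polishSpace
  set D : Set (∀ n : ℕ, U n) := {f | ∀ n, (f n : X) = (f 0 : X)} with hD
  have hDclosed : IsClosed D := by
    have : D = ⋂ n, {f : ∀ n : ℕ, U n | (f n : X) = (f 0 : X)} := by
      ext f; simp [hD]
    rw [this]
    exact isClosed_iInter fun n => isClosed_eq
      (continuous_subtype_val.comp (continuous_apply n))
      (continuous_subtype_val.comp (continuous_apply 0))
  haveI : PolishSpace D := hDclosed.polishSpace
  let e : ↥(⋂ n, U n) ≃ₜ ↥D :=
    { toFun := fun x => ⟨fun n => ⟨x.1, mem_iInter.1 x.2 n⟩, fun n => rfl⟩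
      invFun := fun f => ⟨(f.1 0 : X), mem_iInter.2 fun n => by
        rw [show ((f.1 0 : X)) = (f.1 n : X) from (f.2 n).symm]; exact (f.1 n).2⟩
      left_inv := fun x => rfl
      right_inv := fun f => Subtype.ext (funext fun n => Subtype.ext (f.2 n).symm)
      continuous_toFun := by
        exact Continuous.subtype_mk
          (continuous_pi fun n => (continuous_subtype_val).subtype_mk _) _
      continuous_invFun := by
        exact ((continuous_apply 0).comp continuous_subtype_val).subtype_val.subtype_mk _ }
  exact e.isClosedEmbedding.polishSpace

/-- Complement of a countable union of closed sets in a Polish space is Polish. -/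
lemma compl_union_closed_polish {X : Type*} [TopologicalSpace X] [PolishSpace X]
    {ι : Type*} [Countable ι] (F : ι → Set X) (hF : ∀ i, IsClosed (F i)) :
    PolishSpace ↥(⋂ i, (F i)ᶜ) := by
  cases isEmpty_or_nonempty ι with
  | inl h =>
    rw [iInter_of_empty]
    exact isClosed_univ.polishSpace
  | inr h =>
    obtain ⟨g, hg⟩ := exists_surjective_nat ι
    rw [← hg.iInter_comp (fun i => (F i)ᶜ)]
    exact gdelta_polish _ fun n => (hF (g n)).isOpen_compl

def Cube {α : Type*} (A : Set α) : Set (ℕ → α) := {x | ∀ n, x n ∈ A}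

/-- The cube over a set is homeomorphic to the countable power of the subtype. -/
def cubeHomeo {α : Type*} [TopologicalSpace α] (A : Set α) :
    ↥(Cube A) ≃ₜ (ℕ → ↥A) where
  toFun x n := ⟨x.1 n, x.2 n⟩
  invFun f := ⟨fun n => (f n : α), fun n => (f n).2⟩
  left_inv _ := rfl
  right_inv _ := rfl
  continuous_toFun := continuous_pi fun n =>
    (((continuous_apply n).comp continuous_subtype_val)).subtype_mk _
  continuous_invFun :=
    (continuous_pi fun n => continuous_subtype_val.comp (continuous_apply n)).subtype_mk _

lemma cube_polish {α : Type*} [TopologicalSpace α] [DiscreteTopology α] (A : Set α)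
    (hA : A.Countable) : PolishSpace ↥(Cube A) := by
  haveI : Countable ↥A := hA.to_subtype
  haveI : PolishSpace ↥A := {}
  exact (cubeHomeo A).isClosedEmbedding.polishSpace

lemma cube_closed {α : Type*} [TopologicalSpace α] [DiscreteTopology α] (A : Set α) :
    IsClosed (Cube A) := by
  have : Cube A = ⋂ n, (fun x : ℕ → α => x n) ⁻¹' A := by ext x; simp [Cube]
  rw [this]
  exact isClosed_iInter fun n => (isClosed_discrete A).preimage (continuous_apply n)

/-- Transfer Polishness through nested subtypes. -/
lemma subset_polish {X : Type*} [TopologicalSpace X] {C s : Set X} (hsub : s ⊆ C)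
    (h : PolishSpace ↥(Subtype.val ⁻¹' s : Set ↥C)) : PolishSpace ↥s := by
  let e : ↥s ≃ₜ ↥(Subtype.val ⁻¹' s : Set ↥C) :=
    { toFun := fun y => ⟨⟨y.1, hsub y.2⟩, y.2⟩
      invFun := fun x => ⟨x.1.1, x.2⟩
      left_inv := fun y => rfl
      right_inv := fun x => rfl
      continuous_toFun := (continuous_subtype_val.subtype_mk _).subtype_mk _
      continuous_invFun := (continuous_subtype_val.comp continuous_subtype_val).subtype_mk _ }
  exact e.isClosedEmbedding.polishSpace

def Yset {α : Type*} (K : Set (Set α)) (r : K → K → Prop) (A : K) : Set (ℕ → α) :=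
  {x : ℕ → α | ∀ n, x n ∈ (A : Set α)} \
    ⋃ (B : K) (_ : r B A), {x : ℕ → α | ∀ n, x n ∈ (B : Set α)}

lemma yset_polish {α : Type*} [TopologicalSpace α] [DiscreteTopology α]
    (K : Set (Set α)) (hmem : ∀ A ∈ K, A.Countable ∧ A.Infinite)
    (hKurepa : ∀ X : Set α, X.Countable → {Z : Set α | ∃ A ∈ K, Z = X ∩ A}.Countable)
    (r : K → K → Prop) (A : K) : PolishSpace ↥(Yset K r A) := by
  obtain ⟨hAc, -⟩ := hmem A A.2
  set Aset := (A : Set α) with hAset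
  haveI : PolishSpace ↥(Cube Aset) := cube_polish Aset hAc
  set W : Set (Set α) := {Z : Set α | ∃ B : K, r B A ∧ Z = Aset ∩ ↑B} with hW
  have hWc : W.Countable := by
    refine (hKurepa Aset hAc).mono ?_
    rintro Z ⟨B, -, rfl⟩
    exact ⟨↑B, B.2, rfl⟩
  haveI : Countable ↥W := hWc.to_subtype
  have hsub : Yset K r A ⊆ Cube Aset := fun x hx n => hx.1 n
  refine subset_polish hsub ?_
  have key : (Subtype.val ⁻¹' (Yset K r A) : Set ↥(Cube Aset)) =
      ⋂ Z : ↥W, ((Subtype.val ⁻¹' Cube Z.1 : Set ↥(Cube Aset)))ᶜ := by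
    ext x
    simp only [mem_preimage, mem_iInter, mem_compl_iff, Yset, mem_diff, mem_setOf_eq,
      mem_iUnion]
    simp only [Cube, mem_setOf_eq]
    constructor
    · rintro ⟨-, hnot⟩ ⟨Z, B, hBA, rfl⟩ hz
      exact hnot ⟨B, hBA, fun n => (hz n).2⟩
    · intro h
      refine ⟨x.2, ?_⟩
      rintro ⟨B, hBA, hB⟩
      exact h ⟨Aset ∩ ↑B, B, hBA, rfl⟩ (fun n => ⟨x.2 n, hB n⟩)
  rw [key]
  exact compl_union_closed_polish _ fun Z => (cube_closed Z.1).preimage continuous_subtype_val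

lemma yset_disjoint {α : Type*} (K : Set (Set α)) (r : K → K → Prop) [IsWellOrder K r]
    (A B : K) (hne : A ≠ B) : Disjoint (Yset K r A) (Yset K r B) := by
  have aux : ∀ A B : K, r A B → Disjoint (Yset K r A) (Yset K r B) := by
    intro A B hr
    rw [Set.disjoint_left]
    intro x hxA hxB
    exact hxB.2 (mem_iUnion.2 ⟨A, mem_iUnion.2 ⟨hr, hxA.1⟩⟩)
  rcases trichotomous_of r A B with h | h | h
  · exact aux A B h
  · exact absurd h hne
  · exact (aux B A h).symm

lemma yset_exists {α : Type*} (K : Set (Set α)) (r : K → K → Prop) [IsWellOrder K r]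
    (x : ℕ → α) (A₀ : K) (h₀ : ∀ n, x n ∈ (A₀ : Set α)) :
    ∃ A : K, x ∈ Yset K r A := by
  set T : Set K := {A : K | ∀ n, x n ∈ (A : Set α)} with hT
  obtain ⟨A, hA, hmin⟩ := (IsWellFounded.wf (r := r)).has_min T ⟨A₀, h₀⟩
  refine ⟨A, hA, ?_⟩
  intro hx
  obtain ⟨B, hB⟩ := mem_iUnion.1 hx
  obtain ⟨hrBA, hxB⟩ := mem_iUnion.1 hB
  exact hmin B hxB hrBA

lemma yset_union {α : Type*} (hα : ℵ₀ < #α) (K : Set (Set α))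
    (hcof : ∀ X : Set α, X.Countable → X.Infinite → ∃ A ∈ K, X ⊆ A)
    (r : K → K → Prop) [IsWellOrder K r] :
    (⋃ A : K, Yset K r A) = Set.univ := by
  haveI : Infinite α := Cardinal.infinite_iff.2 hα.le
  rw [eq_univ_iff_forall]
  intro x
  set E : Set α := Set.range x ∪ Set.range (Infinite.natEmbedding α) with hE
  have hEc : E.Countable := (countable_range x).union (countable_range _)
  have hEi : E.Infinite :=
    ((Set.infinite_range_of_injective (Infinite.natEmbedding α).injective).mono
      subset_union_right)
  obtain ⟨A₀, hA₀K, hsub⟩ := hcof E hEc hEi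
  obtain ⟨A, hA⟩ := yset_exists K r x ⟨A₀, hA₀K⟩
    (fun n => hsub (subset_union_left (mem_range_self n)))
  exact mem_iUnion.2 ⟨A, hA⟩

universe u

/-- Countable-fiber cardinal bound. -/
lemma card_le_of_countable_fibers {X : Type u} {Y : Type u} (f : X → Y)
    (h : ∀ y : Y, (f ⁻¹' {y}).Countable) (hX : ℵ₀ < #X) : #X ≤ #Y := by
  have h1 : #X ≤ #Y * ℵ₀ :=
    Cardinal.mk_le_mk_mul_of_mk_preimage_le f fun y => (h y).le_aleph0
  have h2 : #X ≤ max #Y ℵ₀ := by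
    refine h1.trans ((Cardinal.mul_le_max _ _).trans ?_)
    simp
  by_contra hlt
  push_neg at hlt
  exact absurd h2 (not_le.2 (max_lt hlt hX))

lemma K_uncountable {α : Type u} (hα : ℵ₀ < #α) (K : Set (Set α))
    (hmem : ∀ A ∈ K, A.Countable ∧ A.Infinite)
    (hcof : ∀ X : Set α, X.Countable → X.Infinite → ∃ A ∈ K, X ⊆ A) :
    ℵ₀ < #K := by
  haveI : Infinite α := Cardinal.infinite_iff.2 hα.le
  have hc : ∀ a : α, ∃ A : K, a ∈ (A : Set α) := by
    intro a
    set E : Set α := {a} ∪ Set.range (Infinite.natEmbedding α) with hE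
    have hEc : E.Countable := (countable_singleton a).union (countable_range _)
    have hEi : E.Infinite :=
      ((Set.infinite_range_of_injective (Infinite.natEmbedding α).injective).mono
        subset_union_right)
    obtain ⟨A, hAK, hsub⟩ := hcof E hEc hEi
    exact ⟨⟨A, hAK⟩, hsub (subset_union_left rfl)⟩
  choose c hc using hc
  have hfib : ∀ A : K, (c ⁻¹' {A}).Countable := by
    intro A
    have : c ⁻¹' {A} ⊆ (A : Set α) := by
      intro a ha
      have := hc a
      rw [ha] at this
      exact this
    exact ((hmem A A.2).1.mono this)
  exact hα.trans_le (card_le_of_countable_fibers c hfib hα)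

lemma yset_card {α : Type u} [TopologicalSpace α] [DiscreteTopology α] (hα : ℵ₀ < #α)
    (K : Set (Set α))
    (hmem : ∀ A ∈ K, A.Countable ∧ A.Infinite)
    (hcof : ∀ X : Set α, X.Countable → X.Infinite → ∃ A ∈ K, X ⊆ A)
    (hKurepa : ∀ X : Set α, X.Countable → {Z : Set α | ∃ A ∈ K, Z = X ∩ A}.Countable)
    (r : K → K → Prop) [IsWellOrder K r] :
    #{A : K // (Yset K r A).Nonempty} = #K := by
  have hK0 : ℵ₀ < #K := K_uncountable hα K hmem hcof
  have key : ∀ A : K, ∃ (C : K) (x : ℕ → α), x ∈ Yset K r C ∧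
      (∀ B : K, (∀ n, x n ∈ (B : Set α)) → (A : Set α) ⊆ ↑B) := by
    intro A
    obtain ⟨hAc, hAi⟩ := hmem A A.2
    haveI : Countable ↥(A : Set α) := hAc.to_subtype
    haveI : Infinite ↥(A : Set α) := hAi.to_subtype
    obtain ⟨f, hf⟩ := exists_surjective_nat ↥(A : Set α)
    set x : ℕ → α := fun n => (f n : α) with hx
    have hxA : ∀ n, x n ∈ (A : Set α) := fun n => (f n).2
    have hr : ∀ B : K, (∀ n, x n ∈ (B : Set α)) → (A : Set α) ⊆ ↑B := by
      intro B h a ha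
      obtain ⟨n, hn⟩ := hf ⟨a, ha⟩
      have : x n = a := congrArg Subtype.val hn
      exact this ▸ h n
    obtain ⟨C, hC⟩ := yset_exists K r x A hxA
    exact ⟨C, x, hC, hr⟩
  choose Cf xf hxY hmin using key
  set S := {A : K // (Yset K r A).Nonempty} with hS
  set g : K → S := fun A => ⟨Cf A, ⟨xf A, hxY A⟩⟩ with hg
  have hsub : ∀ A : K, (A : Set α) ⊆ (Cf A : Set α) :=
    fun A => hmin A (Cf A) (fun n => (hxY A).1 n)
  have hfib : ∀ b : S, (g ⁻¹' {b}).Countable := by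
    intro b
    set X := (b.1 : Set α) with hX
    have hWc : {Z : Set α | ∃ A ∈ K, Z = X ∩ A}.Countable :=
      hKurepa X (hmem _ b.1.2).1
    haveI := hWc.to_subtype
    rw [← Set.countable_coe_iff]
    have hsubX : ∀ A : ↥(g ⁻¹' {b}), (A.1 : Set α) ⊆ X := by
      intro A
      have hgb : Cf A.1 = b.1 := congrArg Subtype.val A.2
      have := hsub A.1
      rw [hgb] at this
      exact this
    set F : ↥(g ⁻¹' {b}) → ↥{Z : Set α | ∃ A ∈ K, Z = X ∩ A} := fun A =>
      ⟨(A.1 : Set α), ⟨↑A.1, A.1.2, (inter_eq_self_of_subset_right (hsubX A)).symm⟩⟩ with hF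
    have hFinj : Function.Injective F := by
      intro A A' hh
      have h : (F A).1 = (F A').1 := congrArg Subtype.val hh
      have : (A.1 : Set α) = (A'.1 : Set α) := h
      exact Subtype.ext (Subtype.ext this)
    exact Function.Injective.countable hFinj
  exact le_antisymm (Cardinal.mk_subtype_le _)
    (card_le_of_countable_fibers g hfib hK0)

end Aux

/-- For an uncountable discrete space α with a cofinal Kurepa family K in [α]^ω,
well-ordered by ≺, the nonempty sets Y_A = A^ω \ ⋃_{B ≺ A} B^ω are Polish
subspaces partitioning α^ω into exactly |K| pieces; consequently
par(α^ω) ≤ cf[α]^ω. -/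
theorem stmt_13 {α : Type*} [TopologicalSpace α] [DiscreteTopology α]
    (hα : ℵ₀ < #α)
    (K : Set (Set α))
    (hmem : ∀ A ∈ K, A.Countable ∧ A.Infinite)
    (hcof : ∀ X : Set α, X.Countable → X.Infinite → ∃ A ∈ K, X ⊆ A)
    (hKurepa : ∀ X : Set α, X.Countable → {Z : Set α | ∃ A ∈ K, Z = X ∩ A}.Countable)
    (r : K → K → Prop) [IsWellOrder K r]
    (Y : K → Set (ℕ → α))
    (hY : ∀ A : K, Y A = {x : ℕ → α | ∀ n, x n ∈ (A : Set α)} \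
      ⋃ (B : K) (_ : r B A), {x : ℕ → α | ∀ n, x n ∈ (B : Set α)}) :
    (∀ A : K, (Y A).Nonempty → PolishSpace (Y A)) ∧
    (∀ A B : K, A ≠ B → Disjoint (Y A) (Y B)) ∧
    (⋃ A : K, Y A) = Set.univ ∧
    #{A : K // (Y A).Nonempty} = #K ∧
    sInf {c : Cardinal | ∃ P : Set (Set (ℕ → α)),
        (∀ p ∈ P, ∀ q ∈ P, p ≠ q → Disjoint p q) ∧ (∀ p ∈ P, p.Nonempty) ∧
        ⋃₀ P = Set.univ ∧ (∀ p ∈ P, PolishSpace p) ∧ #P = c} ≤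
      sInf {c : Cardinal | ∃ F : Set (Set α),
        (∀ A ∈ F, A.Countable ∧ A.Infinite) ∧
        (∀ X : Set α, X.Countable → X.Infinite → ∃ A ∈ F, X ⊆ A) ∧ #F = c} := by
  have hYY : Y = Yset K r := funext hY
  subst hYY
  refine ⟨fun A _ => yset_polish K hmem hKurepa r A,
    yset_disjoint K r, yset_union hα K hcof r, yset_card hα K hmem hcof hKurepa r, ?_⟩
  have hne : {c : Cardinal | ∃ F : Set (Set α),
      (∀ A ∈ F, A.Countable ∧ A.Infinite) ∧
      (∀ X : Set α, X.Countable → X.Infinite → ∃ A ∈ F, X ⊆ A) ∧ #F = c}.Nonempty :=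
    ⟨#K, K, hmem, hcof, rfl⟩
  refine le_csInf hne ?_
  rintro c ⟨F, hFmem, hFcof, rfl⟩
  have hchoice : ∀ B : F, ∃ A : K, (B : Set α) ⊆ ↑A := by
    intro B
    obtain ⟨hc, hi⟩ := hFmem B B.2
    obtain ⟨A, hAK, hsubA⟩ := hcof B hc hi
    exact ⟨⟨A, hAK⟩, hsubA⟩
  choose h hh using hchoice
  set K' : Set (Set α) := Set.range (fun B : F => (h B : Set α)) with hK'
  have hK'sub : K' ⊆ K := by rintro _ ⟨B, rfl⟩; exact (h B).2
  have hmem' : ∀ A ∈ K', A.Countable ∧ A.Infinite := fun A hA => hmem A (hK'sub hA)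
  have hcof' : ∀ X : Set α, X.Countable → X.Infinite → ∃ A ∈ K', X ⊆ A := by
    intro X hc hi
    obtain ⟨B, hBF, hsubB⟩ := hFcof X hc hi
    exact ⟨↑(h ⟨B, hBF⟩), ⟨⟨B, hBF⟩, rfl⟩, hsubB.trans (hh ⟨B, hBF⟩)⟩
  have hKurepa' : ∀ X : Set α, X.Countable →
      {Z : Set α | ∃ A ∈ K', Z = X ∩ A}.Countable := by
    intro X hc
    refine (hKurepa X hc).mono ?_
    rintro Z ⟨A, hA, rfl⟩
    exact ⟨A, hK'sub hA, rfl⟩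
  letI r' : K' → K' → Prop := WellOrderingRel
  haveI : IsWellOrder K' r' := WellOrderingRel.isWellOrder
  set S' := {A : ↥K' // (Yset K' r' A).Nonempty} with hS'
  set P : Set (Set (ℕ → α)) := Set.range (fun A : S' => Yset K' r' A.1) with hP
  have hPmem : #↥P ∈ {c : Cardinal | ∃ P : Set (Set (ℕ → α)),
      (∀ p ∈ P, ∀ q ∈ P, p ≠ q → Disjoint p q) ∧ (∀ p ∈ P, p.Nonempty) ∧
      ⋃₀ P = Set.univ ∧ (∀ p ∈ P, PolishSpace p) ∧ #P = c} := by
    refine ⟨P, ?_, ?_, ?_, ?_, rfl⟩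
    · rintro p ⟨A, rfl⟩ q ⟨B, rfl⟩ hne
      have hAB : A.1 ≠ B.1 := by
        intro hAB
        exact hne (by simp only [hAB])
      exact yset_disjoint K' r' A.1 B.1 hAB
    · rintro p ⟨A, rfl⟩
      exact A.2
    · rw [eq_univ_iff_forall]
      intro x
      have := yset_union hα K' hcof' r'
      have hx : x ∈ ⋃ A : ↥K', Yset K' r' A := this ▸ mem_univ x
      obtain ⟨A, hA⟩ := mem_iUnion.1 hx
      exact ⟨Yset K' r' A, ⟨⟨A, ⟨x, hA⟩⟩, rfl⟩, hA⟩
    · rintro p ⟨A, rfl⟩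
      exact yset_polish K' hmem' hKurepa' r' A.1
  refine (csInf_le' hPmem).trans ?_
  calc #↥P ≤ #S' := Cardinal.mk_range_le
    _ = #↥K' := yset_card hα K' hmem' hcof' hKurepa' r'
    _ ≤ #↥F := Cardinal.mk_range_le
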